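/- Every nonabelian free group of finite rank admits a discrete right-order (e.g., with any primitive element modulo the commutator subgroup as the least positive element). -/

import Mathlib

set_option linter.unusedSectionVars false

namespace Stmt12

variable {σ : Type*}

/-- convolution of coefficient functions on words -/
def conv (f g : List σ → ℤ) (m : List σ) : ℤ :=
  ∑ k ∈ Finset.range (m.length + 1), f (m.take k) * g (m.drop k)

def oneC : List σ → ℤ := fun m => match m with | [] => 1 | _ => 0

@[simp] theorem oneC_nil : oneC ([] : List σ) = 1 := rfl
@[simp] theorem oneC_cons (x : σ) (m : List σ) : oneC (x :: m) = 0 := rfl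

theorem conv_nil (f g : List σ → ℤ) : conv f g [] = f [] * g [] := by
  simp [conv]

theorem conv_cons (f g : List σ → ℤ) (x : σ) (m : List σ) :
    conv f g (x :: m) = f [] * g (x :: m) + conv (fun s => f (x :: s)) g m := by
  rw [conv, List.length_cons, Finset.sum_range_succ']
  simp [conv, add_comm]

theorem conv_zero_left (f g : List σ → ℤ) (hf : ∀ p, f p = 0) (m : List σ) :
    conv f g m = 0 := by
  apply Finset.sum_eq_zero
  intro k _
  rw [hf, zero_mul]

theorem conv_add_left (f₁ f₂ g : List σ → ℤ) (m : List σ) :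
    conv (fun s => f₁ s + f₂ s) g m = conv f₁ g m + conv f₂ g m := by
  simp [conv, add_mul, Finset.sum_add_distrib]

theorem conv_add_right (f g₁ g₂ : List σ → ℤ) (m : List σ) :
    conv f (fun s => g₁ s + g₂ s) m = conv f g₁ m + conv f g₂ m := by
  simp [conv, mul_add, Finset.sum_add_distrib]

theorem conv_smul_left (c : ℤ) (f g : List σ → ℤ) (m : List σ) :
    conv (fun s => c * f s) g m = c * conv f g m := by
  simp [conv, Finset.mul_sum, mul_assoc]

theorem conv_one_left (g : List σ → ℤ) (m : List σ) : conv oneC g m = g m := by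
  induction m with
  | nil => simp [conv_nil, oneC]
  | cons x m ih =>
    rw [conv_cons]
    have h0 : conv (fun s : List σ => (0 : ℤ)) g m = 0 :=
      conv_zero_left _ _ (fun p => rfl) m
    rw [show (fun s => oneC (x :: s) : List σ → ℤ) = fun _ => 0 from rfl, h0, oneC_nil]
    ring

theorem conv_one_right (g : List σ → ℤ) (m : List σ) : conv g oneC m = g m := by
  induction m generalizing g with
  | nil => simp [conv_nil, oneC]
  | cons x m ih =>
    rw [conv_cons, ih (fun s => g (x :: s))]
    simp [oneC]

theorem conv_assoc (f g h : List σ → ℤ) (m : List σ) :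
    conv (conv f g) h m = conv f (conv g h) m := by
  induction m generalizing f with
  | nil => simp [conv_nil, mul_assoc]
  | cons x m ih =>
    rw [conv_cons, conv_cons]
    have h1 : (fun s => conv f g (x :: s)) =
        fun s => (f [] * g (x :: s)) + conv (fun t => f (x :: t)) g s := by
      funext s; rw [conv_cons]
    rw [h1, conv_add_left, conv_smul_left, ih (fun t => f (x :: t)), conv_nil, conv_cons]
    ring

/-- Noncommutative "power series" with ℤ coefficients indexed by words over σ. -/
structure MS (σ : Type*) where
  c : List σ → ℤ

@[ext] theorem MS.ext' {f g : MS σ} (h : ∀ m, f.c m = g.c m) : f = g := by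
  cases f; cases g; simp only [MS.mk.injEq]; funext m; exact h m

instance : Monoid (MS σ) where
  mul f g := ⟨conv f.c g.c⟩
  one := ⟨oneC⟩
  mul_assoc f g h := MS.ext' (conv_assoc f.c g.c h.c)
  one_mul f := MS.ext' (conv_one_left f.c)
  mul_one f := MS.ext' (conv_one_right f.c)

theorem MS.mul_c (f g : MS σ) (m : List σ) : (f * g).c m = conv f.c g.c m := rfl
theorem MS.one_c (m : List σ) : (1 : MS σ).c m = oneC m := rfl


section Units
variable [DecidableEq σ]

def u (j : σ) : List σ → ℤ := fun m =>
  match m with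
  | [] => 1
  | [x] => if x = j then 1 else 0
  | _ => 0

def v (j : σ) : List σ → ℤ := fun m =>
  if (∀ x ∈ m, x = j) then (-1) ^ m.length else 0

@[simp] theorem u_nil (j : σ) : u j [] = 1 := rfl
@[simp] theorem v_nil (j : σ) : v j [] = 1 := by simp [v]

theorem u_cons_self (j : σ) (m : List σ) : u j (j :: m) = oneC m := by
  cases m with
  | nil => simp [u, oneC]
  | cons y t => rfl

theorem u_cons_ne (j x : σ) (hx : x ≠ j) (m : List σ) : u j (x :: m) = 0 := by
  cases m with
  | nil => simp [u, hx]
  | cons y t => rfl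

theorem v_cons_self (j : σ) (m : List σ) : v j (j :: m) = -(v j m) := by
  by_cases h : ∀ x ∈ m, x = j
  · have h' : ∀ x ∈ j :: m, x = j := by
      intro x hx
      rcases List.mem_cons.1 hx with h1 | h1
      · exact h1
      · exact h x h1
    simp only [v, if_pos h, if_pos h', List.length_cons, pow_succ]
    ring
  · have h' : ¬ ∀ x ∈ j :: m, x = j := by
      intro hc; exact h fun x hx => hc x (List.mem_cons_of_mem _ hx)
    simp [v, h, h']

theorem v_cons_ne (j x : σ) (hx : x ≠ j) (m : List σ) : v j (x :: m) = 0 := by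
  have h' : ¬ ∀ y ∈ x :: m, y = j := fun hc => hx (hc x List.mem_cons_self)
  simp only [v, if_neg h']

theorem conv_u_v (j : σ) (m : List σ) : conv (u j) (v j) m = oneC m := by
  induction m with
  | nil => simp [conv_nil]
  | cons x m ih =>
    rw [conv_cons]
    by_cases hx : x = j
    · subst hx
      have h1 : (fun s => u x (x :: s)) = (oneC : List σ → ℤ) := by
        funext s; exact u_cons_self x s
      rw [h1, conv_one_left, u_nil, one_mul, v_cons_self]
      simp
    · have h1 : conv (fun s => u j (x :: s)) (v j) m = 0 :=
        conv_zero_left _ _ (fun p => u_cons_ne j x hx p) m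
      rw [h1, v_cons_ne j x hx]
      simp

theorem conv_v_u (j : σ) (m : List σ) : conv (v j) (u j) m = oneC m := by
  induction m with
  | nil => simp [conv_nil]
  | cons x m ih =>
    rw [conv_cons]
    by_cases hx : x = j
    · subst hx
      have h1 : (fun s => v x (x :: s)) = (fun s => (-1 : ℤ) * v x s) := by
        funext s; rw [v_cons_self]; ring
      rw [h1, conv_smul_left, ih, u_cons_self, v_nil, one_mul]
      cases m <;> simp [oneC]
    · have h1 : conv (fun s => v j (x :: s)) (u j) m = 0 :=
        conv_zero_left _ _ (fun p => v_cons_ne j x hx p) m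
      rw [h1, u_cons_ne j x hx]
      simp

/-- The Magnus unit `1 + X_j`. -/
def U (j : σ) : (MS σ)ˣ :=
  ⟨⟨u j⟩, ⟨v j⟩, MS.ext' (conv_u_v j), MS.ext' (conv_v_u j)⟩

@[simp] theorem U_val_c (j : σ) (m : List σ) : (U j).val.c m = u j m := rfl
@[simp] theorem U_inv_c (j : σ) (m : List σ) : (U j).inv.c m = v j m := rfl

end Units

section Subgroups
variable [DecidableEq σ]

/-- Units whose coefficients are supported on powers of the single letter `j`. -/
def allJ (j : σ) : Subgroup (MS σ)ˣ where
  carrier := {w | (∀ m, ¬(∀ x ∈ m, x = j) → w.val.c m = 0) ∧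
                  (∀ m, ¬(∀ x ∈ m, x = j) → w.inv.c m = 0)}
  one_mem' := by
    constructor <;> intro m hm
    · rw [show ((1 : (MS σ)ˣ).val.c m) = oneC m from rfl]
      cases m with
      | nil => exact absurd (by simp) hm
      | cons x t => rfl
    · rw [show ((1 : (MS σ)ˣ).inv.c m) = oneC m from rfl]
      cases m with
      | nil => exact absurd (by simp) hm
      | cons x t => rfl
  mul_mem' := by
    rintro a b ⟨ha, ha'⟩ ⟨hb, hb'⟩
    constructor
    · intro m hm
      rw [Units.val_mul, MS.mul_c]
      apply Finset.sum_eq_zero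
      intro k _
      by_cases h1 : ∀ x ∈ m.take k, x = j
      · by_cases h2 : ∀ x ∈ m.drop k, x = j
        · exfalso
          apply hm
          intro x hx
          rw [← List.take_append_drop k m] at hx
          rcases List.mem_append.1 hx with h | h
          · exact h1 x h
          · exact h2 x h
        · rw [hb _ h2, mul_zero]
      · rw [ha _ h1, zero_mul]
    · intro m hm
      have : (a * b).inv = b.inv * a.inv := rfl
      rw [this, MS.mul_c]
      apply Finset.sum_eq_zero
      intro k _
      by_cases h1 : ∀ x ∈ m.take k, x = j
      · by_cases h2 : ∀ x ∈ m.drop k, x = j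
        · exfalso
          apply hm
          intro x hx
          rw [← List.take_append_drop k m] at hx
          rcases List.mem_append.1 hx with h | h
          · exact h1 x h
          · exact h2 x h
        · rw [ha' _ h2, mul_zero]
      · rw [hb' _ h1, zero_mul]
  inv_mem' := by
    rintro a ⟨ha, ha'⟩
    exact ⟨ha', ha⟩

theorem U_mem_allJ (j : σ) : U j ∈ allJ j := by
  constructor
  · intro m hm
    rw [U_val_c]
    cases m with
    | nil => exact absurd (by simp) hm
    | cons x t =>
      by_cases hx : x = j
      · subst hx
        rw [u_cons_self]
        cases t with
        | nil => exact absurd (by simp) hm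
        | cons y s => rfl
      · exact u_cons_ne j x hx t
  · intro m hm
    rw [U_inv_c, v]
    rw [if_neg hm]

/-- Units with constant coefficient 1 (on both sides). -/
def Hsub : Subgroup (MS σ)ˣ where
  carrier := {w | w.val.c [] = 1 ∧ w.inv.c [] = 1}
  one_mem' := ⟨rfl, rfl⟩
  mul_mem' := by
    rintro a b ⟨ha, ha'⟩ ⟨hb, hb'⟩
    constructor
    · rw [Units.val_mul, MS.mul_c, conv_nil, ha, hb, mul_one]
    · have : (a * b).inv = b.inv * a.inv := rfl
      rw [this, MS.mul_c, conv_nil, ha', hb', mul_one]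
  inv_mem' := by rintro a ⟨ha, ha'⟩; exact ⟨ha', ha⟩

theorem U_mem_Hsub (j : σ) : U j ∈ (Hsub : Subgroup (MS σ)ˣ) :=
  ⟨rfl, show v j [] = 1 by simp⟩

/-- Coefficient at `[j]`, as a monoid hom on `Hsub`. -/
def deltaHom (j : σ) : (Hsub : Subgroup (MS σ)ˣ) →* Multiplicative ℤ where
  toFun w := Multiplicative.ofAdd ((w : (MS σ)ˣ).val.c [j])
  map_one' := rfl
  map_mul' := by
    rintro ⟨a, ha, ha'⟩ ⟨b, hb, hb'⟩
    simp only [Subgroup.coe_mul, Units.val_mul, MS.mul_c]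
    rw [conv_cons, conv_nil, ha, hb, one_mul, mul_one]
    rw [← ofAdd_add, add_comm]

theorem Uzpow_c_nil (j : σ) (e : ℤ) : ((U j ^ e : (MS σ)ˣ)).val.c [] = 1 :=
  (Subgroup.zpow_mem Hsub (U_mem_Hsub j) e).1

theorem Uzpow_c_not_allJ (j : σ) (e : ℤ) (m : List σ) (hm : ¬(∀ x ∈ m, x = j)) :
    ((U j ^ e : (MS σ)ˣ)).val.c m = 0 :=
  (Subgroup.zpow_mem (allJ j) (U_mem_allJ j) e).1 m hm

theorem Uzpow_c_single (j : σ) (e : ℤ) : ((U j ^ e : (MS σ)ˣ)).val.c [j] = e := by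
  have h1 : ((⟨U j, U_mem_Hsub j⟩ : (Hsub : Subgroup (MS σ)ˣ)) ^ e : (Hsub : Subgroup (MS σ)ˣ)) =
      ⟨U j ^ e, Subgroup.zpow_mem _ (U_mem_Hsub j) e⟩ := by
    ext
    simp
  have h2 := map_zpow (deltaHom j) (⟨U j, U_mem_Hsub j⟩ : (Hsub : Subgroup (MS σ)ˣ)) e
  rw [h1] at h2
  have h3 : deltaHom j ⟨U j, U_mem_Hsub j⟩ = Multiplicative.ofAdd (1 : ℤ) := by
    change Multiplicative.ofAdd (((U j : (MS σ)ˣ)).val.c [j]) = _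
    simp only [U_val_c]
    rw [show u j [j] = 1 by simp [u]]
  rw [h3] at h2
  have h4 : (Multiplicative.ofAdd (1 : ℤ)) ^ e = Multiplicative.ofAdd e := by
    rw [← ofAdd_zsmul]; simp
  rw [h4] at h2
  have := congrArg Multiplicative.toAdd h2
  exact this

end Subgroups

section Inject
variable [DecidableEq σ]

def prodU (M : List (σ × ℤ)) : (MS σ)ˣ := (M.map (fun p => U p.1 ^ p.2)).prod

theorem prodU_nil : prodU ([] : List (σ × ℤ)) = 1 := rfl
theorem prodU_cons (p : σ × ℤ) (M : List (σ × ℤ)) :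
    prodU (p :: M) = U p.1 ^ p.2 * prodU M := by simp [prodU]

theorem prodU_mem_Hsub (M : List (σ × ℤ)) : prodU M ∈ (Hsub : Subgroup (MS σ)ˣ) := by
  induction M with
  | nil => exact Subgroup.one_mem _
  | cons p M ih =>
    rw [prodU_cons]
    exact Subgroup.mul_mem _ (Subgroup.zpow_mem _ (U_mem_Hsub p.1) p.2) ih

theorem prodU_c_nil (M : List (σ × ℤ)) : (prodU M).val.c [] = 1 := (prodU_mem_Hsub M).1

/-- Lemma B: coefficients at long squarefree-adjacent monomials vanish. -/
theorem prodU_c_long (M : List (σ × ℤ)) (q : List σ) (hq : List.IsChain (· ≠ ·) q)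
    (hlen : M.length < q.length) : (prodU M).val.c q = 0 := by
  induction M generalizing q with
  | nil =>
    cases q with
    | nil => simp at hlen
    | cons x t => exact rfl
  | cons p M ih =>
    obtain ⟨j, e⟩ := p
    match q, hq, hlen with
    | x :: y :: q'', hq, hlen =>
      have hxy : x ≠ y := (List.isChain_cons_cons.1 hq).1
      have hq' : List.IsChain (· ≠ ·) (y :: q'') := (List.isChain_cons_cons.1 hq).2
      rw [prodU_cons, Units.val_mul, MS.mul_c, conv_cons, conv_cons]
      have h0 : (U j ^ e).val.c [] = 1 := Uzpow_c_nil j e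
      have h1 : (prodU M).val.c (x :: y :: q'') = 0 := by
        apply ih _ hq
        simp only [List.length_cons] at hlen ⊢
        omega
      have h2 : (prodU M).val.c (y :: q'') = 0 := by
        apply ih _ hq'
        simp only [List.length_cons] at hlen ⊢
        omega
      have h3 : conv (fun s => (U j ^ e).val.c (x :: y :: s)) (prodU M).val.c q'' = 0 := by
        apply conv_zero_left
        intro s
        apply Uzpow_c_not_allJ
        intro hall
        exact hxy ((hall x (by simp)).trans (hall y (by simp)).symm)
      rw [h0, h1, h2, h3]
      ring

/-- Lemma C: the leading coefficient of a grouped product is the product of exponents. -/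
theorem prodU_c_lead (M : List (σ × ℤ)) (hM : List.IsChain (fun p q => p.1 ≠ q.1) M) :
    (prodU M).val.c (M.map Prod.fst) = (M.map Prod.snd).prod := by
  induction M with
  | nil => exact rfl
  | cons p M ih =>
    obtain ⟨j, e⟩ := p
    have hM' : List.IsChain (fun p q => p.1 ≠ q.1) M := (List.isChain_cons.1 hM).2
    rw [prodU_cons, Units.val_mul, MS.mul_c]
    simp only [List.map_cons, List.prod_cons]
    rw [conv_cons, Uzpow_c_nil, one_mul]
    have hchain : List.IsChain (· ≠ ·) ((j, e).1 :: M.map Prod.fst) := by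
      rw [List.isChain_cons]
      constructor
      · intro y hy
        cases M with
        | nil => simp at hy
        | cons q M' =>
          simp only [List.map_cons, List.head?_cons, Option.mem_def, Option.some.injEq] at hy
          subst hy
          exact (List.isChain_cons_cons.1 hM).1
      · exact List.isChain_map_of_isChain Prod.fst (fun _ _ h => h) hM'
    have h1 : (prodU M).val.c (j :: M.map Prod.fst) = 0 := by
      apply prodU_c_long _ _ hchain
      simp
    rw [h1, zero_add]
    cases M with
    | nil =>
      rw [show (List.map Prod.fst ([] : List (σ × ℤ))) = ([] : List σ) from rfl, conv_nil,
        prodU_c_nil, Uzpow_c_single]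
      simp
    | cons q M' =>
      rw [List.map_cons, conv_cons, Uzpow_c_single]
      have h2 : conv (fun s => (U j ^ e).val.c (j :: q.1 :: s)) (prodU (q :: M')).val.c
          (M'.map Prod.fst) = 0 := by
        apply conv_zero_left
        intro s
        apply Uzpow_c_not_allJ
        intro hall
        exact (List.isChain_cons_cons.1 hM).1 ((hall j (by simp)).trans (hall q.1 (by simp)).symm)
      rw [h2, add_zero]
      rw [← List.map_cons (f := Prod.fst) (a := q) (l := M'), ih hM']

end Inject

section Group
variable [DecidableEq σ]

/-- The Magnus embedding. -/
def mu : FreeGroup σ →* (MS σ)ˣ := FreeGroup.lift (fun i => U i)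

@[simp] theorem mu_of (i : σ) : mu (FreeGroup.of i) = U i := FreeGroup.lift_apply_of

def sgn (b : Bool) : ℤ := if b then 1 else -1

/-- no-cancellation predicate for words -/
def RedW (L : List (σ × Bool)) : Prop :=
  List.IsChain (fun p q : σ × Bool => p.1 = q.1 → p.2 = q.2) L

def scompat (b : Bool) (e : ℤ) : Prop := if b then 0 < e else e < 0

def hdok : List (σ × Bool) → List (σ × ℤ) → Prop
  | [], _ => True
  | (i, b) :: _, M => ∃ e r, M = (i, e) :: r ∧ scompat b e

def grp : List (σ × Bool) → List (σ × ℤ)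
  | [] => []
  | (i, b) :: t =>
    match grp t with
    | [] => [(i, sgn b)]
    | (j, e) :: r => if i = j then (i, sgn b + e) :: r else (i, sgn b) :: (j, e) :: r

theorem grp_cons (i : σ) (b : Bool) (t : List (σ × Bool)) :
    grp ((i, b) :: t) = match grp t with
      | [] => [(i, sgn b)]
      | (j, e) :: r => if i = j then (i, sgn b + e) :: r else (i, sgn b) :: (j, e) :: r := rfl

def prodF (M : List (σ × ℤ)) : FreeGroup σ :=
  (M.map (fun p => FreeGroup.of p.1 ^ p.2)).prod

omit [DecidableEq σ] in
theorem prodF_cons (p : σ × ℤ) (M : List (σ × ℤ)) :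
    prodF (p :: M) = FreeGroup.of p.1 ^ p.2 * prodF M := by simp [prodF]

theorem mu_prodF (M : List (σ × ℤ)) : mu (prodF M) = prodU M := by
  induction M with
  | nil => exact map_one mu
  | cons p M ih =>
    rw [prodF_cons, prodU_cons, map_mul, map_zpow, mu_of, ih]

omit [DecidableEq σ] in
theorem mk_single (i : σ) (b : Bool) :
    FreeGroup.mk [(i, b)] = FreeGroup.of i ^ sgn b := by
  cases b
  · have h1 : (FreeGroup.of i)⁻¹ = FreeGroup.mk [(i, false)] := by
      rw [show FreeGroup.of i = FreeGroup.mk [(i, true)] from rfl, FreeGroup.inv_mk]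
      rfl
    rw [show sgn false = -1 from rfl, zpow_neg, zpow_one, h1]
  · rw [show sgn true = (1 : ℤ) from rfl, zpow_one]
    rfl

theorem mk_grp (L : List (σ × Bool)) : FreeGroup.mk L = prodF (grp L) := by
  induction L with
  | nil => rfl
  | cons p t ih =>
    obtain ⟨i, b⟩ := p
    have hcons : FreeGroup.mk ((i, b) :: t) = FreeGroup.mk [(i, b)] * FreeGroup.mk t := by
      rw [FreeGroup.mul_mk]; rfl
    rw [hcons, mk_single, ih, grp_cons]
    cases hgt : grp t with
    | nil => simp [prodF]
    | cons q r =>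
      obtain ⟨j, e⟩ := q
      dsimp only
      by_cases hij : i = j
      · rw [if_pos hij]
        subst hij
        rw [prodF_cons, prodF_cons, zpow_add]
        simp [mul_assoc]
      · rw [if_neg hij, prodF_cons, prodF_cons, prodF_cons]

theorem grp_nil : grp ([] : List (σ × Bool)) = [] := rfl

theorem grp_spec (L : List (σ × Bool)) (hL : RedW L) :
    List.IsChain (fun p q => p.1 ≠ q.1) (grp L) ∧ (∀ p ∈ grp L, p.2 ≠ 0) ∧ hdok L (grp L) := by
  induction L with
  | nil => exact ⟨List.isChain_nil, by intro p hp; simp [grp] at hp, trivial⟩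
  | cons p t ih =>
    obtain ⟨i, b⟩ := p
    have hL' : RedW t := List.IsChain.tail hL
    obtain ⟨C', NZ', HD'⟩ := ih hL'
    have hsgn : scompat b (sgn b) := by cases b <;> simp [scompat, sgn]
    have hsgn0 : sgn b ≠ 0 := by cases b <;> simp [sgn]
    rw [grp_cons]
    cases t with
    | nil =>
      rw [grp_nil]
      dsimp only
      refine ⟨by simp, ?_, sgn b, [], rfl, hsgn⟩
      intro x hx
      rcases List.mem_cons.1 hx with h | h
      · rw [h]; exact hsgn0
      · simp at h
    | cons p₂ t₂ =>
      obtain ⟨i₂, b₂⟩ := p₂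
      obtain ⟨e', r', heq, hsc⟩ := HD'
      rw [heq] at C' NZ' ⊢
      dsimp only
      by_cases hij : i = i₂
      · rw [if_pos hij]
        have hb : b = b₂ := (List.isChain_cons_cons.1 hL).1 hij
        have hscomp : scompat b e' := by rw [hb]; exact hsc
        have hnz : sgn b + e' ≠ 0 := by
          cases b <;> simp [scompat, sgn] at hscomp ⊢ <;> omega
        have hscomp2 : scompat b (sgn b + e') := by
          cases b <;> simp [scompat, sgn] at hscomp ⊢ <;> omega
        refine ⟨?_, ?_, sgn b + e', r', rfl, hscomp2⟩
        · refine List.isChain_cons.2 ⟨fun y hy => ?_, (List.isChain_cons.1 C').2⟩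
          have := (List.isChain_cons.1 C').1 y hy
          show i ≠ y.1
          rw [hij]
          exact this
        · intro x hx
          rcases List.mem_cons.1 hx with rfl | hx
          · exact hnz
          · exact NZ' x (List.mem_cons_of_mem _ hx)
      · rw [if_neg hij]
        refine ⟨List.isChain_cons_cons.2 ⟨hij, C'⟩, ?_, sgn b, (i₂, e') :: r', rfl, hsgn⟩
        intro x hx
        rcases List.mem_cons.1 hx with rfl | hx
        · exact hsgn0
        · exact NZ' x hx

theorem grp_ne_nil (L : List (σ × Bool)) (hL : L ≠ []) : grp L ≠ [] := by
  cases L with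
  | nil => exact absurd rfl hL
  | cons p t =>
    obtain ⟨i, b⟩ := p
    rw [grp_cons]
    cases grp t with
    | nil => simp
    | cons q r =>
      obtain ⟨j, e⟩ := q
      dsimp only
      by_cases hij : i = j
      · rw [if_pos hij]; simp
      · rw [if_neg hij]; simp

theorem exists_of_not_chain' {α : Type*} {R : α → α → Prop} :
    ∀ (l : List α), ¬List.IsChain R l →
      ∃ l₁ a b l₂, l = l₁ ++ a :: b :: l₂ ∧ ¬R a b
  | [], h => absurd List.isChain_nil h
  | [_], h => absurd (List.isChain_singleton _) h
  | a :: b :: t, h => by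
    rw [List.isChain_cons_cons] at h
    rcases not_and_or.1 h with h1 | h1
    · exact ⟨[], a, b, t, rfl, h1⟩
    · obtain ⟨l₁, x, y, l₂, heq, hR⟩ := exists_of_not_chain' (b :: t) h1
      exact ⟨a :: l₁, x, y, l₂, by rw [heq]; rfl, hR⟩

theorem redw_toWord (g : FreeGroup σ) : RedW g.toWord := by
  by_contra h
  obtain ⟨l₁, a, b, l₂, heq, hR⟩ := exists_of_not_chain' _ h
  obtain ⟨x, c⟩ := a
  obtain ⟨x', c'⟩ := b
  push_neg at hR
  obtain ⟨rfl, hc⟩ := hR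
  have hc' : c' = !c := by cases c <;> cases c' <;> simp_all
  subst hc'
  have hred : FreeGroup.reduce g.toWord = l₁ ++ (x, c) :: (x, !c) :: l₂ := by
    rw [FreeGroup.reduce_toWord, heq]
  exact FreeGroup.reduce.not hred

theorem mu_ne_one {g : FreeGroup σ} (hg : g ≠ 1) : mu g ≠ 1 := by
  set L := g.toWord with hLdef
  have hL : L ≠ [] := fun h => hg (FreeGroup.toWord_eq_nil_iff.1 h)
  have hred : RedW L := redw_toWord g
  obtain ⟨C, NZ, _⟩ := grp_spec L hred
  have hgL : g = prodF (grp L) := by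
    conv_lhs => rw [← FreeGroup.mk_toWord (x := g)]
    exact mk_grp L
  have hmu : mu g = prodU (grp L) := by rw [hgL, mu_prodF]
  have hne : grp L ≠ [] := grp_ne_nil L hL
  intro habs
  have hco : (prodU (grp L)).val.c ((grp L).map Prod.fst) = ((grp L).map Prod.snd).prod :=
    prodU_c_lead _ C
  have hco1 : ((1 : (MS σ)ˣ)).val.c ((grp L).map Prod.fst) = 0 := by
    cases hgl : grp L with
    | nil => exact absurd hgl hne
    | cons q r => rfl
  rw [hmu] at habs
  rw [habs, hco1] at hco
  have : ((grp L).map Prod.snd).prod ≠ 0 := by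
    apply List.prod_ne_zero
    intro h0
    obtain ⟨p, hp, hp0⟩ := List.mem_map.1 h0
    exact NZ p hp hp0
  exact this hco.symm

end Group

section Order
variable [LinearOrder σ] [Finite σ]

noncomputable def tkey (m : List σ) : ℕ ×ₗ List σ := toLex (m.length, m)

def tlt (m m' : List σ) : Prop := tkey m < tkey m'

theorem tlt_trans {m₁ m₂ m₃ : List σ} (h1 : tlt m₁ m₂) (h2 : tlt m₂ m₃) : tlt m₁ m₃ :=
  lt_trans h1 h2

theorem tlt_irrefl (m : List σ) : ¬ tlt m m := lt_irrefl _

theorem tlt_trichotomy (m m' : List σ) (h : m ≠ m') : tlt m m' ∨ tlt m' m := by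
  rcases lt_trichotomy (tkey m) (tkey m') with h1 | h1 | h1
  · exact Or.inl h1
  · exfalso
    apply h
    have := congrArg (fun p => (ofLex p).2) h1
    simpa [tkey] using this
  · exact Or.inr h1

theorem tlt_of_length_lt {m m' : List σ} (h : m.length < m'.length) : tlt m m' := by
  rw [tlt, tkey, tkey, Prod.Lex.lt_iff]
  exact Or.inl h

theorem tlt_take {m : List σ} {k : ℕ} (h : k < m.length) : tlt (m.take k) m :=
  tlt_of_length_lt (by simp [List.length_take]; omega)

theorem tlt_drop {m : List σ} {k : ℕ} (h1 : 0 < k) (h2 : 0 < m.length) :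
    tlt (m.drop k) m := by
  apply tlt_of_length_lt
  simp only [List.length_drop]
  omega

/-- Existence of a `tlt`-minimal element in a nonempty set of words. -/
theorem tlt_exists_min (S : Set (List σ)) (hS : S.Nonempty) :
    ∃ m ∈ S, ∀ m', tlt m' m → m' ∉ S := by
  classical
  set lens : Set ℕ := List.length '' S with hlens
  have hlne : lens.Nonempty := hS.image _
  set ℓ := sInf lens with hldef
  have hlmem : ℓ ∈ lens := Nat.sInf_mem hlne
  set T : Set (List σ) := {m ∈ S | m.length = ℓ} with hT
  have hTne : T.Nonempty := by
    obtain ⟨m, hm, hml⟩ := hlmem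
    exact ⟨m, hm, hml⟩
  have hTfin : T.Finite := (List.finite_length_eq σ ℓ).subset (fun m hm => hm.2)
  obtain ⟨m, hmT, hmin⟩ := Set.exists_min_image T tkey hTfin hTne
  refine ⟨m, hmT.1, ?_⟩
  intro m' hlt hm'S
  have hl1 : ℓ ≤ m'.length := Nat.sInf_le ⟨m', hm'S, rfl⟩
  rw [tlt, tkey, tkey, Prod.Lex.lt_iff] at hlt
  rcases hlt with h | ⟨h1, h2⟩
  · simp only [ofLex_toLex] at h
    have hml : m.length = ℓ := hmT.2
    omega
  · have hm'T : m' ∈ T := ⟨hm'S, by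
      have : m'.length = m.length := h1
      rw [this, hmT.2]⟩
    have := hmin m' hm'T
    have hlt' : tkey m' < tkey m := by
      rw [tkey, tkey, Prod.Lex.lt_iff]
      exact Or.inr ⟨h1, h2⟩
    exact absurd this (not_le.2 hlt')

theorem conv_lead_right (d w : List σ → ℤ) (hw : w [] = 1) (m₀ : List σ)
    (h : ∀ m', tlt m' m₀ → d m' = 0) :
    conv d w m₀ = d m₀ ∧ ∀ m', tlt m' m₀ → conv d w m' = 0 := by
  constructor
  · rw [conv, Finset.sum_range_succ, List.take_length, List.drop_length, hw, mul_one]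
    have : ∀ k ∈ Finset.range m₀.length, d (m₀.take k) * w (m₀.drop k) = 0 := by
      intro k hk
      rw [h _ (tlt_take (Finset.mem_range.1 hk)), zero_mul]
    rw [Finset.sum_eq_zero this, zero_add]
  · intro m' hm'
    rw [conv]
    apply Finset.sum_eq_zero
    intro k hk
    rcases lt_or_ge k m'.length with hkl | hkl
    · rw [h _ (tlt_trans (tlt_take hkl) hm'), zero_mul]
    · rw [List.take_of_length_le hkl, h _ hm', zero_mul]

theorem conv_lead_left (w d : List σ → ℤ) (hw : w [] = 1) (m₀ : List σ)
    (h : ∀ m', tlt m' m₀ → d m' = 0) :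
    conv w d m₀ = d m₀ ∧ ∀ m', tlt m' m₀ → conv w d m' = 0 := by
  constructor
  · rw [conv, Finset.sum_range_succ']
    simp only [List.take_zero, List.drop_zero, hw, one_mul]
    have : ∀ k ∈ Finset.range m₀.length, w (m₀.take (k + 1)) * d (m₀.drop (k + 1)) = 0 := by
      intro k hk
      have hk' := Finset.mem_range.1 hk
      rw [h _ (tlt_drop (Nat.succ_pos k) (by omega)), mul_zero]
    rw [Finset.sum_eq_zero this, zero_add]
  · intro m' hm'
    rw [conv, Finset.sum_range_succ']
    simp only [List.take_zero, List.drop_zero, hw, one_mul]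
    have : ∀ k ∈ Finset.range m'.length, w (m'.take (k + 1)) * d (m'.drop (k + 1)) = 0 := by
      intro k hk
      have hk' := Finset.mem_range.1 hk
      have : tlt (m'.drop (k + 1)) m₀ :=
        tlt_trans (tlt_drop (Nat.succ_pos k) (by omega)) hm'
      rw [h _ this, mul_zero]
    rw [Finset.sum_eq_zero this, zero_add, h _ hm']

end Order

section PosM
variable [LinearOrder σ] [Finite σ]

/-- coefficients of `μ g - 1` -/
def dd (g : FreeGroup σ) : List σ → ℤ := fun m => (mu g).val.c m - oneC m

theorem mu_mem_Hsub (g : FreeGroup σ) : mu g ∈ (Hsub : Subgroup (MS σ)ˣ) := by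
  induction g with
  | C1 => rw [map_one]; exact Subgroup.one_mem _
  | of i => rw [mu_of]; exact U_mem_Hsub i
  | inv_of i h => rw [map_inv]; exact Subgroup.inv_mem _ h
  | mul x y hx hy => rw [map_mul]; exact Subgroup.mul_mem _ hx hy

theorem mu_c_nil (g : FreeGroup σ) : (mu g).val.c [] = 1 := (mu_mem_Hsub g).1

theorem dd_one (m : List σ) : dd (1 : FreeGroup σ) m = 0 := by
  show (mu 1).val.c m - oneC m = 0
  rw [map_one, Units.val_one, MS.one_c]
  ring

theorem mu_c_mul (g h : FreeGroup σ) (m : List σ) :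
    (mu (g * h)).val.c m = conv (mu g).val.c (mu h).val.c m := by
  rw [map_mul]
  rfl

theorem dd_mul (g h : FreeGroup σ) (m : List σ) :
    dd (g * h) m = conv (dd g) (mu h).val.c m + dd h m := by
  have h1 : (mu g).val.c = (fun p => dd g p + oneC p) := by funext p; simp [dd]
  have h2 : conv (mu g).val.c (mu h).val.c m
      = conv (dd g) (mu h).val.c m + (mu h).val.c m := by
    rw [h1, conv_add_left, conv_one_left]
  rw [dd, mu_c_mul, h2, dd]
  ring

def PosM (g : FreeGroup σ) : Prop :=
  ∃ m₀, (0 < dd g m₀ ∧ ∀ m', tlt m' m₀ → dd g m' = 0)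

theorem posM_not_one : ¬ PosM (1 : FreeGroup σ) := by
  rintro ⟨m₀, h1, _⟩
  rw [dd_one] at h1
  exact lt_irrefl 0 h1

theorem dd_inv_eq (h : FreeGroup σ) (m : List σ) :
    dd h⁻¹ m = - conv (dd h) (mu h⁻¹).val.c m := by
  have := dd_mul h h⁻¹ m
  rw [mul_inv_cancel] at this
  rw [dd_one] at this
  linarith

theorem dd_inv_lead (h : FreeGroup σ) (m₀ : List σ)
    (hz : ∀ m', tlt m' m₀ → dd h m' = 0) :
    dd h⁻¹ m₀ = - dd h m₀ ∧ ∀ m', tlt m' m₀ → dd h⁻¹ m' = 0 := by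
  obtain ⟨e1, e2⟩ := conv_lead_right (dd h) (mu h⁻¹).val.c (mu_c_nil h⁻¹) m₀ hz
  constructor
  · rw [dd_inv_eq, e1]
  · intro m' hm'
    rw [dd_inv_eq, e2 m' hm', neg_zero]

theorem posM_mul {g h : FreeGroup σ} (hg : PosM g) (hh : PosM h) : PosM (g * h) := by
  obtain ⟨m₁, hp1, hz1⟩ := hg
  obtain ⟨m₂, hp2, hz2⟩ := hh
  obtain ⟨e1, e2⟩ := conv_lead_right (dd g) (mu h).val.c (mu_c_nil h) m₁ hz1
  by_cases heq : m₁ = m₂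
  · subst heq
    refine ⟨m₁, ?_, ?_⟩
    · rw [dd_mul, e1]
      linarith
    · intro m' hm'
      rw [dd_mul, e2 m' hm', hz2 m' hm', add_zero]
  · rcases tlt_trichotomy m₁ m₂ heq with hlt | hlt
    · refine ⟨m₁, ?_, ?_⟩
      · rw [dd_mul, e1, hz2 m₁ hlt, add_zero]
        exact hp1
      · intro m' hm'
        rw [dd_mul, e2 m' hm', hz2 m' (tlt_trans hm' hlt), add_zero]
    · refine ⟨m₂, ?_, ?_⟩
      · rw [dd_mul, e2 m₂ hlt]
        linarith
      · intro m' hm'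
        rw [dd_mul, e2 m' (tlt_trans hm' hlt), hz2 m' hm', add_zero]

theorem dd_conj_eq (g h : FreeGroup σ) (m : List σ) :
    dd (g * h * g⁻¹) m = conv (mu g).val.c (conv (dd h) (mu g⁻¹).val.c) m := by
  have e1 : (mu (h * g⁻¹)).val.c = conv (mu h).val.c (mu g⁻¹).val.c :=
    funext (mu_c_mul h g⁻¹)
  have e2 : (mu (g * (h * g⁻¹))).val.c m
      = conv (mu g).val.c (conv (mu h).val.c (mu g⁻¹).val.c) m := by
    rw [mu_c_mul, e1]
  have e3 : (conv (mu h).val.c (mu g⁻¹).val.c)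
      = fun p => conv (dd h) (mu g⁻¹).val.c p + (mu g⁻¹).val.c p := by
    funext p
    have h1 : (mu h).val.c = (fun q => dd h q + oneC q) := by funext q; simp [dd]
    rw [h1, conv_add_left, conv_one_left]
  have e4 : conv (mu g).val.c (mu g⁻¹).val.c m = oneC m := by
    rw [← mu_c_mul, mul_inv_cancel, map_one]
    rfl
  have e5 : dd (g * h * g⁻¹) m = (mu (g * (h * g⁻¹))).val.c m - oneC m := by
    rw [dd, mul_assoc]
  rw [e5, e2, e3, conv_add_right, e4]
  simp

theorem posM_conj (g : FreeGroup σ) {h : FreeGroup σ} (hh : PosM h) :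
    PosM (g * h * g⁻¹) := by
  obtain ⟨m₀, hp, hz⟩ := hh
  obtain ⟨e1, e2⟩ := conv_lead_right (dd h) (mu g⁻¹).val.c (mu_c_nil g⁻¹) m₀ hz
  obtain ⟨f1, f2⟩ := conv_lead_left (mu g).val.c (conv (dd h) (mu g⁻¹).val.c)
    (mu_c_nil g) m₀ e2
  refine ⟨m₀, ?_, ?_⟩
  · rw [dd_conj_eq, f1, e1]
    exact hp
  · intro m' hm'
    rw [dd_conj_eq, f2 m' hm']

theorem posM_total {h : FreeGroup σ} (hh : h ≠ 1) : PosM h ∨ PosM h⁻¹ := by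
  have hmu : mu h ≠ 1 := mu_ne_one hh
  have hdd : ∃ m, dd h m ≠ 0 := by
    by_contra hc
    push_neg at hc
    apply hmu
    have : (mu h).val = (1 : (MS σ)ˣ).val := by
      apply MS.ext'
      intro m
      have := hc m
      rw [dd, sub_eq_zero] at this
      rw [this]
      rfl
    exact Units.ext this
  obtain ⟨m, hm⟩ := hdd
  obtain ⟨m₀, hm₀S, hmin⟩ := tlt_exists_min {m | dd h m ≠ 0} ⟨m, hm⟩
  have hz : ∀ m', tlt m' m₀ → dd h m' = 0 := by
    intro m' hm'
    by_contra hc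
    exact hmin m' hm' hc
  rcases lt_trichotomy 0 (dd h m₀) with hpos | hzero | hneg
  · exact Or.inl ⟨m₀, hpos, hz⟩
  · exact absurd hzero.symm hm₀S
  · right
    obtain ⟨e1, e2⟩ := dd_inv_lead h m₀ hz
    exact ⟨m₀, by rw [e1]; linarith, e2⟩

end PosM

section Cone
variable [LinearOrder σ] [Finite σ] (a0 : σ)

def phi : FreeGroup σ →* Multiplicative ℤ :=
  FreeGroup.lift (fun i => Multiplicative.ofAdd (if i = a0 then (1 : ℤ) else 0))

def phz (g : FreeGroup σ) : ℤ := Multiplicative.toAdd (phi a0 g)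

theorem phz_mul (g h : FreeGroup σ) : phz a0 (g * h) = phz a0 g + phz a0 h := by
  rw [phz, map_mul, toAdd_mul]
  rfl

theorem phz_inv (g : FreeGroup σ) : phz a0 g⁻¹ = -(phz a0 g) := by
  rw [phz, map_inv, toAdd_inv]
  rfl

theorem phz_one : phz a0 (1 : FreeGroup σ) = 0 := by
  rw [phz, map_one]
  rfl

theorem phz_of : phz a0 (FreeGroup.of a0) = 1 := by
  rw [phz, phi, FreeGroup.lift_apply_of, if_pos rfl]
  rfl

theorem phz_zpow_a (e : ℤ) : phz a0 ((FreeGroup.of a0) ^ e) = e := by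
  have h1 : phz a0 (FreeGroup.of a0) = 1 := phz_of a0
  rw [phz, map_zpow, toAdd_zpow]
  rw [phz] at h1
  rw [h1, smul_eq_mul, mul_one]

theorem zpow_a_ne_one {e : ℤ} (he : e ≠ 0) : (FreeGroup.of a0) ^ e ≠ (1 : FreeGroup σ) := by
  intro h
  apply he
  have := congrArg (phz a0) h
  rwa [phz_zpow_a, phz_one] at this

def kk (g : FreeGroup σ) : FreeGroup σ := g * (FreeGroup.of a0) ^ (-(phz a0 g))

theorem kk_one : kk a0 (1 : FreeGroup σ) = 1 := by
  rw [kk, phz_one]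
  group

theorem kk_mul (g h : FreeGroup σ) :
    kk a0 (g * h) = kk a0 g *
      ((FreeGroup.of a0) ^ (phz a0 g) * kk a0 h * (FreeGroup.of a0) ^ (-(phz a0 g))) := by
  rw [kk, kk, kk, phz_mul]
  group

theorem kk_inv (g : FreeGroup σ) :
    kk a0 g⁻¹ = (FreeGroup.of a0) ^ (-(phz a0 g)) * (kk a0 g)⁻¹ *
      (FreeGroup.of a0) ^ (phz a0 g) := by
  rw [kk, kk, phz_inv]
  group

theorem kk_mul_ainv (g : FreeGroup σ) : kk a0 (g * (FreeGroup.of a0)⁻¹) = kk a0 g := by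
  rw [kk, kk, phz_mul, phz_inv, phz_of]
  group

theorem phz_mul_ainv (g : FreeGroup σ) :
    phz a0 (g * (FreeGroup.of a0)⁻¹) = phz a0 g - 1 := by
  rw [phz_mul, phz_inv, phz_of]
  ring

theorem kk_eq_one_imp {g : FreeGroup σ} (h : kk a0 g = 1) :
    g = (FreeGroup.of a0) ^ (phz a0 g) := by
  have : kk a0 g * (FreeGroup.of a0) ^ (phz a0 g) = g := by
    rw [kk]
    group
  rw [h, one_mul] at this
  exact this.symm

/-- the positive cone -/
def PosF (g : FreeGroup σ) : Prop :=
  PosM (kk a0 g) ∨ (kk a0 g = 1 ∧ 0 < phz a0 g)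

theorem posF_not_one : ¬ PosF a0 (1 : FreeGroup σ) := by
  rintro (h | ⟨h1, h2⟩)
  · rw [kk_one] at h
    exact posM_not_one h
  · rw [phz_one] at h2
    exact lt_irrefl 0 h2

theorem posM_conj_zpow (e : ℤ) {h : FreeGroup σ} (hh : PosM h) :
    PosM ((FreeGroup.of a0) ^ e * h * (FreeGroup.of a0) ^ (-e)) := by
  have := posM_conj ((FreeGroup.of a0) ^ e) hh
  rwa [← zpow_neg] at this

theorem posM_conj_zpow' (e : ℤ) {h : FreeGroup σ} (hh : PosM h) :
    PosM ((FreeGroup.of a0) ^ (-e) * h * (FreeGroup.of a0) ^ e) := by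
  have := posM_conj_zpow a0 (-e) hh
  rwa [neg_neg] at this

theorem posF_mul {g h : FreeGroup σ} (hg : PosF a0 g) (hh : PosF a0 h) :
    PosF a0 (g * h) := by
  rcases hg with hg1 | ⟨hg1, hg2⟩ <;> rcases hh with hh1 | ⟨hh1, hh2⟩
  · left
    rw [kk_mul]
    exact posM_mul hg1 (posM_conj_zpow a0 _ hh1)
  · left
    rw [kk_mul, hh1]
    have : (FreeGroup.of a0) ^ (phz a0 g) * (1 : FreeGroup σ) *
        (FreeGroup.of a0) ^ (-(phz a0 g)) = 1 := by group
    rw [this, mul_one]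
    exact hg1
  · left
    rw [kk_mul, hg1, one_mul]
    exact posM_conj_zpow a0 _ hh1
  · right
    constructor
    · rw [kk_mul, hg1, hh1]
      group
    · rw [phz_mul]
      omega

theorem posF_total {g : FreeGroup σ} (hg : g ≠ 1) : PosF a0 g ∨ PosF a0 g⁻¹ := by
  by_cases hk : kk a0 g = 1
  · have hkinv : kk a0 g⁻¹ = 1 := by
      rw [kk_inv, hk]
      group
    have hphz : phz a0 g ≠ 0 := by
      intro h0
      apply hg
      have := kk_eq_one_imp a0 hk
      rw [h0] at this
      simpa using this
    rcases lt_or_gt_of_ne hphz with hlt | hgt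
    · right
      right
      refine ⟨hkinv, ?_⟩
      rw [phz_inv]
      omega
    · left
      right
      exact ⟨hk, hgt⟩
  · rcases posM_total hk with hp | hp
    · exact Or.inl (Or.inl hp)
    · right
      left
      rw [kk_inv]
      exact posM_conj_zpow' a0 _ hp

end Cone

end Stmt12

variable {G : Type*} [Group G]

/-- A right order on a group: a strict total order invariant under right multiplication. -/
def IsRightOrder (r : G → G → Prop) : Prop :=
  IsStrictTotalOrder G r ∧ ∀ f g h : G, r f g → r (f * h) (g * h)

/-- `a` is the least element greater than the identity for the order `r`. -/
def LeastPos (r : G → G → Prop) (a : G) : Prop :=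
  r 1 a ∧ ∀ g : G, r 1 g → g = a ∨ r a g

theorem stmt12 (n : ℕ) (hn : 2 ≤ n) :
    ∃ r : FreeGroup (Fin n) → FreeGroup (Fin n) → Prop,
      IsRightOrder r ∧ ∃ a : FreeGroup (Fin n), LeastPos r a := by
  have hn0 : 0 < n := by omega
  set a0 : Fin n := ⟨0, hn0⟩ with ha0
  set r : FreeGroup (Fin n) → FreeGroup (Fin n) → Prop :=
    fun f g => Stmt12.PosF a0 (g * f⁻¹) with hr
  have ht : ∀ f g, r f g ∨ f = g ∨ r g f := by
    intro f g
    by_cases hfg : f = g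
    · exact Or.inr (Or.inl hfg)
    · have hne : g * f⁻¹ ≠ 1 := by
        intro h
        exact hfg (mul_inv_eq_one.1 h).symm
      rcases Stmt12.posF_total a0 hne with h | h
      · exact Or.inl h
      · right; right
        rw [mul_inv_rev, inv_inv] at h
        exact h
  have hi : ∀ f, ¬ r f f := by
    intro f h
    rw [hr] at h
    simp only [mul_inv_cancel] at h
    exact Stmt12.posF_not_one a0 h
  have htr : ∀ f g h, r f g → r g h → r f h := by
    intro f g h h1 h2
    have h3 := Stmt12.posF_mul a0 h2 h1
    have e : (h * g⁻¹) * (g * f⁻¹) = h * f⁻¹ := by group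
    rw [e] at h3
    exact h3
  have hinv : ∀ f g k, r f g → r (f * k) (g * k) := by
    intro f g k hfg
    have e : (g * k) * (f * k)⁻¹ = g * f⁻¹ := by group
    show Stmt12.PosF a0 ((g * k) * (f * k)⁻¹)
    rw [e]
    exact hfg
  have hka : Stmt12.kk a0 (FreeGroup.of a0) = 1 := by
    rw [Stmt12.kk, Stmt12.phz_of]
    group
  refine ⟨r, ⟨{ trichotomous := fun a b h1 h2 => ((ht a b).resolve_left h1).resolve_right h2, irrefl := hi, trans := htr }, hinv⟩,
    FreeGroup.of a0, ?_, ?_⟩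
  · show Stmt12.PosF a0 (FreeGroup.of a0 * 1⁻¹)
    rw [inv_one, mul_one]
    exact Or.inr ⟨hka, by rw [Stmt12.phz_of]; norm_num⟩
  · intro g hg
    have hg' : Stmt12.PosF a0 g := by
      have : g * (1 : FreeGroup (Fin n))⁻¹ = g := by group
      rw [hr] at hg
      rwa [this] at hg
    rcases hg' with hp | ⟨h1, h2⟩
    · right
      show Stmt12.PosF a0 (g * (FreeGroup.of a0)⁻¹)
      left
      rw [Stmt12.kk_mul_ainv]
      exact hp
    · by_cases hone : Stmt12.phz a0 g = 1
      · left
        have := Stmt12.kk_eq_one_imp a0 h1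
        rw [hone, zpow_one] at this
        exact this
      · right
        show Stmt12.PosF a0 (g * (FreeGroup.of a0)⁻¹)
        right
        constructor
        · rw [Stmt12.kk_mul_ainv]
          exact h1
        · rw [Stmt12.phz_mul_ainv]
          omega
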